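/- Let x_k be the k-th iterate of the randomized extended Kaczmarz method (Algorithm: z_k = z_{k-1} - (A_{(j)}^T z_{k-1}/||A_{(j)}||^2)A_{(j)} with column j sampled with probability ||A_{(j)}||^2/||A||_F^2, then x_k = x_{k-1} - ((A^{(i)} x_{k-1} - b^{(i)} + z_k^{(i)})/||A^{(i)}||^2)(A^{(i)})^T with row i sampled with probability ||A^{(i)}||^2/||A||_F^2), with x_0 ∈ range(A^T) and z_0 ∈ b + range(A). If v_ℓ is a right singular vector of A with singular value σ_ℓ and x_⋆ = A^† b, then E[⟨x_k - x_⋆, v_ℓ⟩] = (k/||A||_F^2)(1 - σ_ℓ^2/||A||_F^2)^k ⟨-A^T z_0, v_ℓ⟩ + (1 - σ_ℓ^2/||A||_F^2)^k ⟨x_0 - x_⋆, v_ℓ⟩. -/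

import Mathlib

open Matrix BigOperators Finset

noncomputable def frob2 {m n : ℕ} (A : Matrix (Fin m) (Fin n) ℝ) : ℝ :=
  ∑ i, ∑ j, (A i j) ^ 2

noncomputable def colNorm2 {m n : ℕ} (A : Matrix (Fin m) (Fin n) ℝ) (j : Fin n) : ℝ :=
  ∑ i, (A i j) ^ 2

noncomputable def rowNorm2 {m n : ℕ} (A : Matrix (Fin m) (Fin n) ℝ) (i : Fin m) : ℝ :=
  ∑ j, (A i j) ^ 2

noncomputable def colStep {m n : ℕ} (A : Matrix (Fin m) (Fin n) ℝ) (j : Fin n)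
    (z : Fin m → ℝ) : Fin m → ℝ :=
  z - ((Aᵀ j ⬝ᵥ z) / colNorm2 A j) • Aᵀ j

/-- One REK step: first an RK step on `Aᵀ z = 0` using column `j = p.1`, then an RK
step on `A x = b - z_k` using row `i = p.2` (with the freshly updated `z`). -/
noncomputable def rekStep {m n : ℕ} (A : Matrix (Fin m) (Fin n) ℝ)
    (b : Fin m → ℝ) (p : Fin n × Fin m) (s : (Fin m → ℝ) × (Fin n → ℝ)) :
    (Fin m → ℝ) × (Fin n → ℝ) :=
  let z' := colStep A p.1 s.1
  (z', s.2 - ((A p.2 ⬝ᵥ s.2 - b p.2 + z' p.2) / rowNorm2 A p.2) • A p.2)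

/-- REK iterates: the head of the list is the pair of indices of the most recent step. -/
noncomputable def rekIter {m n : ℕ} (A : Matrix (Fin m) (Fin n) ℝ)
    (b : Fin m → ℝ) (s0 : (Fin m → ℝ) × (Fin n → ℝ)) :
    List (Fin n × Fin m) → (Fin m → ℝ) × (Fin n → ℝ)
  | [] => s0
  | p :: l => rekStep A b p (rekIter A b s0 l)

/-- Probability of choosing the index pair `p` at a given REK step. -/
noncomputable def rekProb {m n : ℕ} (A : Matrix (Fin m) (Fin n) ℝ)
    (p : Fin n × Fin m) : ℝ :=
  (colNorm2 A p.1 / frob2 A) * (rowNorm2 A p.2 / frob2 A)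


lemma dotAux {m n : ℕ} (A : Matrix (Fin m) (Fin n) ℝ) (w : Fin m → ℝ) (v : Fin n → ℝ) :
    (Aᵀ *ᵥ w) ⬝ᵥ v = w ⬝ᵥ (A *ᵥ v) := by
  rw [mulVec_transpose, dotProduct_mulVec]

lemma col_eq_zero {m n : ℕ} {A : Matrix (Fin m) (Fin n) ℝ} {j : Fin n}
    (h : colNorm2 A j = 0) (i : Fin m) : A i j = 0 := by
  have := (Finset.sum_eq_zero_iff_of_nonneg (fun i _ => sq_nonneg (A i j))).mp h i (mem_univ i)
  exact pow_eq_zero_iff two_ne_zero |>.mp this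

lemma row_eq_zero {m n : ℕ} {A : Matrix (Fin m) (Fin n) ℝ} {i : Fin m}
    (h : rowNorm2 A i = 0) (j : Fin n) : A i j = 0 := by
  have := (Finset.sum_eq_zero_iff_of_nonneg (fun j _ => sq_nonneg (A i j))).mp h j (mem_univ j)
  exact pow_eq_zero_iff two_ne_zero |>.mp this

lemma sum_colNorm2 {m n : ℕ} (A : Matrix (Fin m) (Fin n) ℝ) :
    ∑ j, colNorm2 A j = frob2 A := by
  rw [frob2, Finset.sum_comm]; rfl

lemma sum_rowNorm2 {m n : ℕ} (A : Matrix (Fin m) (Fin n) ℝ) :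
    ∑ i, rowNorm2 A i = frob2 A := rfl

lemma frob2_pos {m n : ℕ} {A : Matrix (Fin m) (Fin n) ℝ} (hA : A ≠ 0) : 0 < frob2 A := by
  have h : ∃ i j, A i j ≠ 0 := by
    by_contra h; push_neg at h
    exact hA (Matrix.ext fun i j => h i j)
  obtain ⟨i, j, hij⟩ := h
  refine Finset.sum_pos' (fun i _ => Finset.sum_nonneg fun j _ => sq_nonneg _) ⟨i, mem_univ i, ?_⟩
  exact Finset.sum_pos' (fun j _ => sq_nonneg _) ⟨j, mem_univ j, by positivity⟩

lemma keyZ {m n : ℕ} {A : Matrix (Fin m) (Fin n) ℝ} {σ : ℝ} {v : Fin n → ℝ}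
    (hv : Aᵀ *ᵥ (A *ᵥ v) = σ ^ 2 • v) (hF : frob2 A ≠ 0) (z : Fin m → ℝ) :
    ∑ j, (colNorm2 A j / frob2 A) * ((Aᵀ *ᵥ colStep A j z) ⬝ᵥ v)
      = (1 - σ ^ 2 / frob2 A) * ((Aᵀ *ᵥ z) ⬝ᵥ v) := by
  have hterm : ∀ j, (colNorm2 A j / frob2 A) * ((Aᵀ *ᵥ colStep A j z) ⬝ᵥ v)
      = (colNorm2 A j / frob2 A) * ((Aᵀ *ᵥ z) ⬝ᵥ v)
        - (σ ^ 2 / frob2 A) * ((Aᵀ *ᵥ z) j * v j) := by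
    intro j
    have h1 : (Aᵀ *ᵥ (Aᵀ j)) ⬝ᵥ v = σ ^ 2 * v j := by
      rw [dotAux]
      have : (Aᵀ j) ⬝ᵥ (A *ᵥ v) = (Aᵀ *ᵥ (A *ᵥ v)) j := rfl
      rw [this, hv]; rfl
    have h2 : (Aᵀ j) ⬝ᵥ z = (Aᵀ *ᵥ z) j := rfl
    rw [colStep, mulVec_sub, sub_dotProduct, mulVec_smul, smul_dotProduct, h1]
    rcases eq_or_ne (colNorm2 A j) 0 with h | h
    · have hz : (Aᵀ *ᵥ z) j = 0 := by
        simp [mulVec, dotProduct, transpose_apply, fun i => col_eq_zero h i]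
      rw [h, h2, hz]; ring
    · rw [h2]; field_simp
      linear_combination (-(σ ^ 2 * v j * (Aᵀ *ᵥ z) j)) * mul_inv_cancel₀ h
  rw [Finset.sum_congr rfl (fun j _ => hterm j), Finset.sum_sub_distrib,
    ← Finset.sum_mul, ← Finset.sum_div, sum_colNorm2, ← Finset.mul_sum]
  have : ∑ j, (Aᵀ *ᵥ z) j * v j = (Aᵀ *ᵥ z) ⬝ᵥ v := rfl
  rw [this, div_self hF]; ring

lemma symAux {m n : ℕ} (A : Matrix (Fin m) (Fin n) ℝ) (w u : Fin n → ℝ) :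
    (Aᵀ *ᵥ (A *ᵥ w)) ⬝ᵥ u = (Aᵀ *ᵥ (A *ᵥ u)) ⬝ᵥ w := by
  rw [dotAux, dotAux, dotProduct_comm]

lemma keyXrow {m n : ℕ} {A : Matrix (Fin m) (Fin n) ℝ} {σ : ℝ} {v : Fin n → ℝ}
    (hv : Aᵀ *ᵥ (A *ᵥ v) = σ ^ 2 • v) (hF : frob2 A ≠ 0)
    {b xsb : Fin m → ℝ} {xs : Fin n → ℝ} (hxsb : A *ᵥ xs = xsb)
    (hls : Aᵀ *ᵥ (b - xsb) = 0)
    (z' : Fin m → ℝ) (x : Fin n → ℝ) :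
    ∑ i, (rowNorm2 A i / frob2 A)
        * ((x - ((A i ⬝ᵥ x - b i + z' i) / rowNorm2 A i) • A i - xs) ⬝ᵥ v)
      = (1 - σ ^ 2 / frob2 A) * ((x - xs) ⬝ᵥ v)
        - (1 / frob2 A) * ((Aᵀ *ᵥ z') ⬝ᵥ v) := by
  have hterm : ∀ i, (rowNorm2 A i / frob2 A)
        * ((x - ((A i ⬝ᵥ x - b i + z' i) / rowNorm2 A i) • A i - xs) ⬝ᵥ v)
      = (rowNorm2 A i / frob2 A) * ((x - xs) ⬝ᵥ v)
        - (1 / frob2 A) * (((A *ᵥ x) i - b i + z' i) * (A *ᵥ v) i) := by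
    intro i
    have h1 : (x - ((A i ⬝ᵥ x - b i + z' i) / rowNorm2 A i) • A i - xs) ⬝ᵥ v
        = (x - xs) ⬝ᵥ v - ((A i ⬝ᵥ x - b i + z' i) / rowNorm2 A i) * (A i ⬝ᵥ v) := by
      have : x - ((A i ⬝ᵥ x - b i + z' i) / rowNorm2 A i) • A i - xs
          = (x - xs) - ((A i ⬝ᵥ x - b i + z' i) / rowNorm2 A i) • A i := by
        abel
      rw [this, sub_dotProduct, smul_dotProduct, smul_eq_mul]
    rw [h1]
    have h2 : A i ⬝ᵥ x = (A *ᵥ x) i := rfl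
    have h3 : A i ⬝ᵥ v = (A *ᵥ v) i := rfl
    rcases eq_or_ne (rowNorm2 A i) 0 with h | h
    · have hx : (A *ᵥ x) i = 0 := by
        simp [mulVec, dotProduct, fun j => row_eq_zero h j]
      have hvv : (A *ᵥ v) i = 0 := by
        simp [mulVec, dotProduct, fun j => row_eq_zero h j]
      rw [h2, h3, h, hx, hvv]; ring
    · rw [h2, h3]; field_simp
  rw [Finset.sum_congr rfl (fun i _ => hterm i), Finset.sum_sub_distrib,
    ← Finset.sum_mul, ← Finset.sum_div, sum_rowNorm2, ← Finset.mul_sum]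
  have key : ∑ i, ((A *ᵥ x) i - b i + z' i) * (A *ᵥ v) i
      = σ ^ 2 * ((x - xs) ⬝ᵥ v) + (Aᵀ *ᵥ z') ⬝ᵥ v := by
    have h4 : ∑ i, ((A *ᵥ x) i - b i + z' i) * (A *ᵥ v) i
        = (A *ᵥ x - b + z') ⬝ᵥ (A *ᵥ v) := rfl
    rw [h4, ← dotAux]
    have h5 : A *ᵥ x - b + z' = A *ᵥ (x - xs) - (b - xsb) + z' := by
      rw [← hxsb, mulVec_sub]; abel
    rw [h5, mulVec_add, mulVec_sub, hls, sub_zero, add_dotProduct, symAux, hv]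
    have : (σ ^ 2 • v) ⬝ᵥ (x - xs) = σ ^ 2 * ((x - xs) ⬝ᵥ v) := by
      rw [smul_dotProduct, dotProduct_comm]; rfl
    rw [this]
  rw [key, div_self hF]; ring

lemma keyZpair {m n : ℕ} {A : Matrix (Fin m) (Fin n) ℝ} {σ : ℝ} {v : Fin n → ℝ}
    (hv : Aᵀ *ᵥ (A *ᵥ v) = σ ^ 2 • v) (hF : frob2 A ≠ 0) (b : Fin m → ℝ)
    (s : (Fin m → ℝ) × (Fin n → ℝ)) :
    ∑ p : Fin n × Fin m, rekProb A p * ((Aᵀ *ᵥ (rekStep A b p s).1) ⬝ᵥ v)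
      = (1 - σ ^ 2 / frob2 A) * ((Aᵀ *ᵥ s.1) ⬝ᵥ v) := by
  rw [Fintype.sum_prod_type]
  have : ∀ j : Fin n, ∑ i : Fin m,
      rekProb A (j, i) * ((Aᵀ *ᵥ (rekStep A b (j, i) s).1) ⬝ᵥ v)
      = (colNorm2 A j / frob2 A) * ((Aᵀ *ᵥ colStep A j s.1) ⬝ᵥ v) := by
    intro j
    have : ∀ i : Fin m, rekProb A (j, i) * ((Aᵀ *ᵥ (rekStep A b (j, i) s).1) ⬝ᵥ v)
        = (rowNorm2 A i / frob2 A)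
          * ((colNorm2 A j / frob2 A) * ((Aᵀ *ᵥ colStep A j s.1) ⬝ᵥ v)) := by
      intro i
      simp only [rekStep, rekProb]
      ring
    rw [Finset.sum_congr rfl (fun i _ => this i), ← Finset.sum_mul,
      ← Finset.sum_div, sum_rowNorm2, div_self hF, one_mul]
  rw [Finset.sum_congr rfl (fun j _ => this j), keyZ hv hF]

lemma keyXpair {m n : ℕ} {A : Matrix (Fin m) (Fin n) ℝ} {σ : ℝ} {v : Fin n → ℝ}
    (hv : Aᵀ *ᵥ (A *ᵥ v) = σ ^ 2 • v) (hF : frob2 A ≠ 0)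
    {b xsb : Fin m → ℝ} {xs : Fin n → ℝ} (hxsb : A *ᵥ xs = xsb)
    (hls : Aᵀ *ᵥ (b - xsb) = 0)
    (s : (Fin m → ℝ) × (Fin n → ℝ)) :
    ∑ p : Fin n × Fin m, rekProb A p * (((rekStep A b p s).2 - xs) ⬝ᵥ v)
      = (1 - σ ^ 2 / frob2 A) * ((s.2 - xs) ⬝ᵥ v)
        - (1 / frob2 A) * ((1 - σ ^ 2 / frob2 A) * ((Aᵀ *ᵥ s.1) ⬝ᵥ v)) := by
  rw [Fintype.sum_prod_type]
  have hj : ∀ j : Fin n, ∑ i : Fin m,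
      rekProb A (j, i) * (((rekStep A b (j, i) s).2 - xs) ⬝ᵥ v)
      = (colNorm2 A j / frob2 A)
        * ((1 - σ ^ 2 / frob2 A) * ((s.2 - xs) ⬝ᵥ v)
          - (1 / frob2 A) * ((Aᵀ *ᵥ colStep A j s.1) ⬝ᵥ v)) := by
    intro j
    have h1 : ∀ i : Fin m, rekProb A (j, i) * (((rekStep A b (j, i) s).2 - xs) ⬝ᵥ v)
        = (colNorm2 A j / frob2 A) * ((rowNorm2 A i / frob2 A)
          * ((s.2 - ((A i ⬝ᵥ s.2 - b i + (colStep A j s.1) i) / rowNorm2 A i) • A i - xs) ⬝ᵥ v)) := by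
      intro i
      simp only [rekStep, rekProb]
      ring
    rw [Finset.sum_congr rfl (fun i _ => h1 i), ← Finset.mul_sum,
      keyXrow hv hF hxsb hls]
  rw [Finset.sum_congr rfl (fun j _ => hj j)]
  simp only [mul_sub]
  rw [Finset.sum_sub_distrib, ← Finset.sum_mul, ← Finset.sum_div, sum_colNorm2,
    div_self hF, one_mul]
  congr 1
  have : ∀ j : Fin n, colNorm2 A j / frob2 A * (1 / frob2 A * ((Aᵀ *ᵥ colStep A j s.1) ⬝ᵥ v))
      = (1 / frob2 A) * (colNorm2 A j / frob2 A * ((Aᵀ *ᵥ colStep A j s.1) ⬝ᵥ v)) := by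
    intro j; ring
  rw [Finset.sum_congr rfl (fun j _ => this j), ← Finset.mul_sum, keyZ hv hF]

lemma sum_pi_succ {P : Type*} [Fintype P] (k : ℕ) (f : (Fin (k + 1) → P) → ℝ) :
    ∑ ω : Fin (k + 1) → P, f ω = ∑ p : P, ∑ ω' : Fin k → P, f (Fin.cons p ω') := by
  rw [← Equiv.sum_comp (Fin.consEquiv (fun _ : Fin (k+1) => P)) f, Fintype.sum_prod_type]
  rfl

lemma iter_cons {m n : ℕ} (A : Matrix (Fin m) (Fin n) ℝ) (b : Fin m → ℝ)
    (s0 : (Fin m → ℝ) × (Fin n → ℝ)) {k : ℕ} (p : Fin n × Fin m)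
    (ω' : Fin k → Fin n × Fin m) :
    rekIter A b s0 (List.ofFn (Fin.cons p ω'))
      = rekStep A b p (rekIter A b s0 (List.ofFn ω')) := by
  rw [List.ofFn_succ]
  simp only [Fin.cons_zero, Fin.cons_succ, rekIter]

lemma rekProd_cons {m n : ℕ} (A : Matrix (Fin m) (Fin n) ℝ) {k : ℕ}
    (p : Fin n × Fin m) (ω' : Fin k → Fin n × Fin m) :
    ∏ t : Fin (k + 1), rekProb A ((Fin.cons p ω' : Fin (k+1) → Fin n × Fin m) t)
      = rekProb A p * ∏ t : Fin k, rekProb A (ω' t) := by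
  rw [Fin.prod_univ_succ]
  simp only [Fin.cons_zero, Fin.cons_succ]

lemma mainAux {m n : ℕ} {A : Matrix (Fin m) (Fin n) ℝ} {σ : ℝ} {v : Fin n → ℝ}
    (hv : Aᵀ *ᵥ (A *ᵥ v) = σ ^ 2 • v) (hF : frob2 A ≠ 0)
    {b xsb : Fin m → ℝ} {xs : Fin n → ℝ} (hxsb : A *ᵥ xs = xsb)
    (hls : Aᵀ *ᵥ (b - xsb) = 0)
    (z0 : Fin m → ℝ) (x0 : Fin n → ℝ) (k : ℕ) :
    (∑ ω : Fin k → Fin n × Fin m, (∏ t, rekProb A (ω t))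
        * ((Aᵀ *ᵥ (rekIter A b (z0, x0) (List.ofFn ω)).1) ⬝ᵥ v)
      = (1 - σ ^ 2 / frob2 A) ^ k * ((Aᵀ *ᵥ z0) ⬝ᵥ v))
    ∧ (∑ ω : Fin k → Fin n × Fin m, (∏ t, rekProb A (ω t))
        * (((rekIter A b (z0, x0) (List.ofFn ω)).2 - xs) ⬝ᵥ v)
      = (1 - σ ^ 2 / frob2 A) ^ k * ((x0 - xs) ⬝ᵥ v)
        - (k : ℝ) * (1 - σ ^ 2 / frob2 A) ^ k / frob2 A * ((Aᵀ *ᵥ z0) ⬝ᵥ v)) := by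
  induction k with
  | zero =>
      constructor <;> · rw [Fintype.sum_unique]; simp [rekIter]
  | succ k ih =>
      obtain ⟨ihz, ihx⟩ := ih
      have hW : ∀ (f : ((Fin m → ℝ) × (Fin n → ℝ)) → ℝ),
          ∑ ω : Fin (k + 1) → Fin n × Fin m, (∏ t, rekProb A (ω t))
              * f (rekIter A b (z0, x0) (List.ofFn ω))
          = ∑ ω' : Fin k → Fin n × Fin m, (∏ t, rekProb A (ω' t))
              * ∑ p : Fin n × Fin m,
                rekProb A p * f (rekStep A b p (rekIter A b (z0, x0) (List.ofFn ω'))) := by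
        intro f
        rw [sum_pi_succ k (fun ω => (∏ t, rekProb A (ω t))
          * f (rekIter A b (z0, x0) (List.ofFn ω))), Finset.sum_comm]
        refine Finset.sum_congr rfl fun ω' _ => ?_
        rw [Finset.mul_sum]
        refine Finset.sum_congr rfl fun p _ => ?_
        rw [rekProd_cons, iter_cons]
        ring
      constructor
      · rw [hW (fun s => (Aᵀ *ᵥ s.1) ⬝ᵥ v)]
        have : ∀ ω' : Fin k → Fin n × Fin m, (∏ t, rekProb A (ω' t))
            * ∑ p : Fin n × Fin m, rekProb A p
              * ((Aᵀ *ᵥ (rekStep A b p (rekIter A b (z0, x0) (List.ofFn ω'))).1) ⬝ᵥ v)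
            = (1 - σ ^ 2 / frob2 A) * ((∏ t, rekProb A (ω' t))
              * ((Aᵀ *ᵥ (rekIter A b (z0, x0) (List.ofFn ω')).1) ⬝ᵥ v)) := by
          intro ω'
          rw [keyZpair hv hF]
          ring
        rw [Finset.sum_congr rfl (fun ω' _ => this ω'), ← Finset.mul_sum, ihz]
        ring
      · rw [hW (fun s => (s.2 - xs) ⬝ᵥ v)]
        have : ∀ ω' : Fin k → Fin n × Fin m, (∏ t, rekProb A (ω' t))
            * ∑ p : Fin n × Fin m, rekProb A p
              * (((rekStep A b p (rekIter A b (z0, x0) (List.ofFn ω'))).2 - xs) ⬝ᵥ v)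
            = (1 - σ ^ 2 / frob2 A) * ((∏ t, rekProb A (ω' t))
              * (((rekIter A b (z0, x0) (List.ofFn ω')).2 - xs) ⬝ᵥ v))
              - (1 / frob2 A) * ((1 - σ ^ 2 / frob2 A) * ((∏ t, rekProb A (ω' t))
                * ((Aᵀ *ᵥ (rekIter A b (z0, x0) (List.ofFn ω')).1) ⬝ᵥ v))) := by
          intro ω'
          rw [keyXpair hv hF hxsb hls]
          ring
        rw [Finset.sum_congr rfl (fun ω' _ => this ω'), Finset.sum_sub_distrib,
          ← Finset.mul_sum, ihx]
        have h2 : ∑ ω' : Fin k → Fin n × Fin m, (1 / frob2 A) * ((1 - σ ^ 2 / frob2 A)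
            * ((∏ t, rekProb A (ω' t))
              * ((Aᵀ *ᵥ (rekIter A b (z0, x0) (List.ofFn ω')).1) ⬝ᵥ v)))
            = (1 / frob2 A) * ((1 - σ ^ 2 / frob2 A)
              * ((1 - σ ^ 2 / frob2 A) ^ k * ((Aᵀ *ᵥ z0) ⬝ᵥ v))) := by
          rw [← Finset.mul_sum, ← Finset.mul_sum, ihz]
        rw [h2]
        push_cast
        ring


/-- closed form for the expected projected error of REK. With
`x⋆ = A†b` (characterized by `Aᵀ(b - A x⋆) = 0` and `x⋆ ∈ range Aᵀ`),
`x_0 ∈ range Aᵀ`, `z_0 ∈ b + range A`, and `vℓ` a unit right singular vector of `A`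
with singular value `σℓ > 0`,
`E[⟨x_k - x⋆, vℓ⟩] = (k/‖A‖_F²)(1-σℓ²/‖A‖_F²)^k ⟨-Aᵀ z_0, vℓ⟩
  + (1-σℓ²/‖A‖_F²)^k ⟨x_0 - x⋆, vℓ⟩`. -/
theorem rek_projected_error_closed_form {m n : ℕ}
    (A : Matrix (Fin m) (Fin n) ℝ) (hA : A ≠ 0)
    (b : Fin m → ℝ) (xs : Fin n → ℝ)
    (hls : Aᵀ *ᵥ (b - A *ᵥ xs) = 0) (hxs : ∃ y, xs = Aᵀ *ᵥ y)
    (x0 : Fin n → ℝ) (hx0 : ∃ u, x0 = Aᵀ *ᵥ u)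
    (z0 : Fin m → ℝ) (hz0 : ∃ y, z0 = b + A *ᵥ y)
    (σ : ℝ) (hσ : 0 < σ) (v : Fin n → ℝ)
    (hv : Aᵀ *ᵥ (A *ᵥ v) = σ ^ 2 • v) (hvunit : v ⬝ᵥ v = 1)
    (k : ℕ) :
    ∑ ω : Fin k → Fin n × Fin m,
        (∏ t, rekProb A (ω t))
          * (((rekIter A b (z0, x0) (List.ofFn ω)).2 - xs) ⬝ᵥ v)
      = ((k : ℝ) / frob2 A) * (1 - σ ^ 2 / frob2 A) ^ k * ((-(Aᵀ *ᵥ z0)) ⬝ᵥ v)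
        + (1 - σ ^ 2 / frob2 A) ^ k * ((x0 - xs) ⬝ᵥ v) := by
  have hF : frob2 A ≠ 0 := (frob2_pos hA).ne'
  have h := (mainAux hv hF rfl hls z0 x0 k).2
  rw [h, neg_dotProduct]
  ring
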